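/- Let G be a finite cut group whose Sylow 2-subgroups are isomorphic to Q8. Then G contains no element of order 105 = 3·5·7 and no element of order 84 = 4·3·7. -/

import Mathlib

/-- `G` is a cut group: every generator of `⟨g⟩` is conjugate to `g` or `g⁻¹`, for all `g`. -/
def IsCutGroup (G : Type*) [Group G] : Prop :=
  ∀ g h : G, Subgroup.zpowers h = Subgroup.zpowers g → IsConj g h ∨ IsConj g⁻¹ h

open Subgroup

lemma cut_key {G : Type} [Group G] [Finite G] (hcut : IsCutGroup G) (g : G) :
    ∃ (N : Subgroup G) (K : Subgroup N) (r : ℕ),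
      Nat.totient (orderOf g) ≤ 2 * r ∧ r ∣ Nat.totient (orderOf g) ∧
      Nat.card N = Nat.card K * r ∧ orderOf g ∣ Nat.card K ∧
      (∀ a b : N, a * b * a⁻¹ * b⁻¹ ∈ K) := by
  set H := Subgroup.zpowers g with hH
  set gH : H := ⟨g, mem_zpowers g⟩ with hgH
  have gen : ∀ h : H, ∃ m : ℤ, gH ^ m = h := fun h => by
    obtain ⟨m, hm⟩ := h.2
    exact ⟨m, Subtype.ext (by simpa using hm)⟩
  haveI hcyc : IsCyclic H := ⟨gH, fun h => gen h⟩
  have pow : ∀ σ : MulAut H, ∃ k : ℤ, ∀ h : H, σ h = h ^ k := by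
    intro σ
    obtain ⟨k, hk⟩ := gen (σ gH)
    refine ⟨k, fun h => ?_⟩
    obtain ⟨m, hm⟩ := gen h
    rw [← hm, map_zpow, ← hk, ← zpow_mul, ← zpow_mul, mul_comm]
  have agree : ∀ σ τ : MulAut H, σ gH = τ gH → σ = τ := by
    intro σ τ hστ
    obtain ⟨k, hk⟩ := pow σ
    obtain ⟨l, hl⟩ := pow τ
    ext h
    obtain ⟨m, hm⟩ := gen h
    have h1 : gH ^ k = gH ^ l := by rw [← hk gH, ← hl gH, hστ]
    rw [hk, hl, ← hm, ← zpow_mul, ← zpow_mul, mul_comm m k, mul_comm m l, zpow_mul, zpow_mul,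
      h1]
  have comm : ∀ σ τ : MulAut H, σ * τ = τ * σ := by
    intro σ τ
    obtain ⟨k, hk⟩ := pow σ
    obtain ⟨l, hl⟩ := pow τ
    ext h
    have : σ (τ h) = τ (σ h) := by
      rw [hk, hl, hk, hl, ← zpow_mul, ← zpow_mul, mul_comm]
    exact congrArg Subtype.val this
  have mulcomm : ∀ a b : H, a * b = b * a := fun a b => by
    obtain ⟨m, hm⟩ := gen a
    obtain ⟨k, hk⟩ := gen b
    rw [← hm, ← hk, ← zpow_add, ← zpow_add, add_comm]
  let ι : MulAut H :=
    { toFun := (·⁻¹), invFun := (·⁻¹), left_inv := fun a => inv_inv a,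
      right_inv := fun a => inv_inv a,
      map_mul' := fun a b => by
        show (a * b)⁻¹ = a⁻¹ * b⁻¹
        rw [mul_inv_rev, mulcomm] }
  set N := normalizer (H : Set G) with hN
  set φ := H.normalizerMonoidHom with hφ
  have φ_apply : ∀ (x : N) (h : H), ((φ x h : G)) = x * h * x⁻¹ := fun x h => rfl
  have memN : ∀ x : G, Subgroup.zpowers (x * g * x⁻¹) = H → x ∈ N := by
    intro x hx
    have hmap : H.map (MulAut.conj x).toMonoidHom = H := by
      rw [hH, MonoidHom.map_zpowers]
      simpa using hx
    rw [hN, mem_normalizer_iff]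
    intro h
    constructor
    · intro hh
      have : (MulAut.conj x).toMonoidHom h ∈ H.map (MulAut.conj x).toMonoidHom :=
        mem_map_of_mem _ hh
      rw [hmap] at this
      simpa using this
    · intro hh
      rw [← hmap] at hh
      obtain ⟨h₀, h₀H, e⟩ := hh
      have : h₀ = h := (MulAut.conj x).injective (by simpa using e)
      rwa [← this]
  have cover : ∀ σ : MulAut H, σ ∈ φ.range ∨ ι * σ ∈ φ.range := by
    intro σ
    set h' := σ gH with hh'
    have hz : Subgroup.zpowers (h' : G) = H := by
      apply le_antisymm (zpowers_le.2 h'.2)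
      obtain ⟨m, hm⟩ := gen (σ⁻¹ gH)
      have hgen : h' ^ m = gH := by
        rw [hh', ← map_zpow, hm]
        exact σ.apply_symm_apply gH
      exact zpowers_le.mpr ⟨m, congrArg Subtype.val hgen⟩
    rcases hcut g h' (by rw [hz]) with hconj | hconj
    · obtain ⟨c, hc'⟩ := isConj_iff.mp hconj
      have hcN : c ∈ N := memN c (by rw [hc', hz])
      left
      exact ⟨⟨c, hcN⟩, agree _ σ (Subtype.ext hc')⟩
    · obtain ⟨c, hc⟩ := isConj_iff.mp hconj
      have hc' : c * g * c⁻¹ = ((h' : G))⁻¹ := by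
        rw [← hc]; group
      have hcN : c ∈ N := memN c (by rw [hc']; rw [zpowers_inv, hz])
      right
      refine ⟨⟨c, hcN⟩, agree _ (ι * σ) (Subtype.ext ?_)⟩
      show (c * (gH : G) * c⁻¹) = ((ι * σ) gH : G)
      show (c * g * c⁻¹) = (((σ gH)⁻¹ : H) : G)
      rw [hc']
      rfl
  have hMA : Nat.card (MulAut H) = Nat.totient (orderOf g) := by
    rw [IsCyclic.card_mulAut, Nat.card_zpowers]
  refine ⟨N, φ.ker, Nat.card φ.range, ?_, ?_, ?_, ?_, ?_⟩
  · -- totient ≤ 2 * r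
    have cover' : (Set.univ : Set (MulAut H)) ⊆
        (φ.range : Set (MulAut H)) ∪ (fun σ => ι⁻¹ * σ) '' (φ.range : Set (MulAut H)) := by
      intro σ _
      rcases cover σ with h | h
      · exact Or.inl h
      · exact Or.inr ⟨ι * σ, h, by simp⟩
    have h1 := Set.ncard_le_ncard cover' (Set.toFinite _)
    have h2 := Set.ncard_union_le (φ.range : Set (MulAut H))
      ((fun σ => ι⁻¹ * σ) '' (φ.range : Set (MulAut H)))
    have h3 : ((fun σ => ι⁻¹ * σ) '' (φ.range : Set (MulAut H))).ncard =
        (φ.range : Set (MulAut H)).ncard :=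
      Set.ncard_image_of_injective _ (mul_right_injective ι⁻¹)
    have h4 : (φ.range : Set (MulAut H)).ncard = Nat.card φ.range :=
      (Nat.card_coe_set_eq _).symm
    rw [Set.ncard_univ, hMA] at h1
    omega
  · rw [← hMA]
    exact Subgroup.card_subgroup_dvd_card _
  · rw [card_eq_card_quotient_mul_card_subgroup φ.ker,
      Nat.card_congr (QuotientGroup.quotientKerEquivRange φ).toEquiv, mul_comm]
  · have hgN : g ∈ N := le_normalizer (mem_zpowers g)
    have hgK : (⟨g, hgN⟩ : N) ∈ φ.ker := by
      rw [MonoidHom.mem_ker]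
      apply MulEquiv.ext
      intro h
      apply Subtype.ext
      rw [φ_apply]
      obtain ⟨m, hm⟩ := gen h
      have : (h : G) = g ^ m := by rw [← hm]; rfl
      show g * (h : G) * g⁻¹ = h
      rw [this]; group
    have : orderOf (⟨g, hgN⟩ : N) = orderOf g :=
      (orderOf_injective N.subtype (subtype_injective N) ⟨g, hgN⟩).symm
    exact this ▸ Subgroup.orderOf_dvd_natCard φ.ker hgK
  · intro a b
    rw [MonoidHom.mem_ker, map_mul, map_mul, map_mul, map_inv, map_inv, comm (φ a) (φ b)]
    group

theorem stmt_15 {G : Type} [Group G] [Finite G] (hcut : IsCutGroup G)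
    (hQ8 : ∀ P : Sylow 2 G, Nonempty (P ≃* QuaternionGroup 2)) :
    ∀ g : G, orderOf g ≠ 105 ∧ orderOf g ≠ 84 := by
  haveI : Fact (Nat.Prime 2) := ⟨Nat.prime_two⟩
  -- the 2-part of |G| is exactly 2^3
  obtain ⟨P⟩ : Nonempty (Sylow 2 G) := inferInstance
  obtain ⟨eP⟩ := hQ8 P
  have hcP : Nat.card P = 8 := by
    rw [Nat.card_congr eP.toEquiv]
    simp [Nat.card_eq_fintype_card, QuaternionGroup.card]
  have hfact : (Nat.card G).factorization 2 = 3 := by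
    have h := P.card_eq_multiplicity
    rw [hcP] at h
    have : (8 : ℕ) = 2 ^ 3 := by norm_num
    rw [this] at h
    exact (Nat.pow_right_injective (le_refl 2) h).symm
  have no16 : ¬ (2 ^ 4 ∣ Nat.card G) := by
    rw [Nat.Prime.pow_dvd_iff_le_factorization Nat.prime_two Nat.card_pos.ne', hfact]
    omega
  -- no 2-subgroup of order 8 is commutative
  have hP8 : ∀ M : Subgroup G, Nat.card M = 8 → (∀ x y : M, x * y = y * x) → False := by
    intro M hM hcomm
    let S : Sylow 2 G := Sylow.ofCard M (by rw [hM, hfact]; norm_num)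
    obtain ⟨e⟩ := hQ8 S
    have hq : ∀ x y : QuaternionGroup 2, x * y = y * x := by
      intro x y
      have h := hcomm (e.symm x) (e.symm y)
      calc x * y = e (e.symm x * e.symm y) := by rw [map_mul]; simp
        _ = e (e.symm y * e.symm x) := congrArg e h
        _ = y * x := by rw [map_mul]; simp
    exact absurd (hq (.a 1) (.xa 0)) (by decide)
  intro g
  constructor
  · -- no element of order 105
    intro h105
    obtain ⟨N, K, r, hle, hdvd, hcard, hord, hcommut⟩ := cut_key hcut g
    rw [h105] at hle hdvd hord
    have ht : Nat.totient 105 = 48 := by decide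
    rw [ht] at hle hdvd
    have hNG : Nat.card N ∣ Nat.card G := Subgroup.card_subgroup_dvd_card N
    have hrN : r ∣ Nat.card N := Dvd.intro_left _ hcard.symm
    have h8r : 8 ∣ r ∧ r ≠ 48 := by
      constructor
      · have h1 : 24 ≤ r := by omega
        have h2 : r ≤ 48 := Nat.le_of_dvd (by norm_num) hdvd
        interval_cases r <;> omega
      · rintro rfl
        exact no16 (dvd_trans (by norm_num) (hrN.trans hNG))
    have hKodd : ¬ 2 ∣ Nat.card K := by
      intro h2
      apply no16
      have : (2 ^ 4 : ℕ) = 2 * 8 := by norm_num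
      rw [this]
      exact (mul_dvd_mul h2 h8r.1).trans ((dvd_of_eq hcard.symm).trans hNG)
    -- the 2-part of |N| is 2^3
    have hfactN : (Nat.card N).factorization 2 = 3 := by
      have hpos : Nat.card N ≠ 0 := Nat.card_pos.ne'
      have ha : 2 ^ 3 ∣ Nat.card N := dvd_trans (by norm_num : (2:ℕ)^3 ∣ 8) (h8r.1.trans hrN)
      have hb : ¬ 2 ^ 4 ∣ Nat.card N := fun h => no16 (h.trans hNG)
      rw [Nat.Prime.pow_dvd_iff_le_factorization Nat.prime_two hpos] at ha hb
      omega
    obtain ⟨Q⟩ : Nonempty (Sylow 2 N) := inferInstance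
    have hQcard : Nat.card Q = 8 := by
      rw [Q.card_eq_multiplicity, hfactN]; norm_num
    set M : Subgroup G := (Q : Subgroup N).map N.subtype with hMdef
    have hMcard : Nat.card M = 8 := by
      rw [← hQcard]
      exact (Nat.card_congr
        (Subgroup.equivMapOfInjective _ _ (Subgroup.subtype_injective N)).toEquiv).symm
    apply hP8 M hMcard
    rintro ⟨x, hx⟩ ⟨y, hy⟩
    obtain ⟨a, ha, hax⟩ := Subgroup.mem_map.mp hx
    obtain ⟨b, hb, hby⟩ := Subgroup.mem_map.mp hy
    have hcK : a * b * a⁻¹ * b⁻¹ ∈ K := hcommut a b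
    have hcQ : a * b * a⁻¹ * b⁻¹ ∈ (Q : Subgroup N) :=
      mul_mem (mul_mem (mul_mem ha hb) (inv_mem ha)) (inv_mem hb)
    have h1 : orderOf (a * b * a⁻¹ * b⁻¹) ∣ 8 :=
      hQcard ▸ Subgroup.orderOf_dvd_natCard _ hcQ
    have h2 : orderOf (a * b * a⁻¹ * b⁻¹) ∣ Nat.card K :=
      Subgroup.orderOf_dvd_natCard _ hcK
    have hd1 : orderOf (a * b * a⁻¹ * b⁻¹) = 1 := by
      set d := orderOf (a * b * a⁻¹ * b⁻¹) with hd
      have hd8 : d ≤ 8 := Nat.le_of_dvd (by norm_num) h1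
      have : ∀ k, d ∣ k → (2 ∣ d → 2 ∣ k) := fun k hk h2d => h2d.trans hk
      have h2K := this _ h2
      interval_cases d <;> omega
    have hab : a * b = b * a := by
      have := orderOf_eq_one_iff.mp hd1
      have h' : a * b * a⁻¹ * b⁻¹ * b * a = 1 * b * a := by rw [this]
      simpa [mul_assoc] using h'
    apply Subtype.ext
    show x * y = y * x
    rw [← hax, ← hby, ← map_mul, ← map_mul, hab]
  · -- no element of order 84
    intro h84
    obtain ⟨N, K, r, hle, hdvd, hcard, hord, _⟩ := cut_key hcut g
    rw [h84] at hle hdvd hord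
    have ht : Nat.totient 84 = 24 := by decide
    rw [ht] at hle hdvd
    have h4r : 4 ∣ r := by
      have h1 : 12 ≤ r := by omega
      have h2 : r ≤ 24 := Nat.le_of_dvd (by norm_num) hdvd
      interval_cases r <;> omega
    have h4K : 4 ∣ Nat.card K := dvd_trans (by norm_num) hord
    apply no16
    have : (2 ^ 4 : ℕ) = 4 * 4 := by norm_num
    rw [this]
    exact ((mul_dvd_mul h4K h4r).trans (dvd_of_eq hcard.symm)).trans
      (Subgroup.card_subgroup_dvd_card N)
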